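/- Suppose (ρ, E) solves the reduced Euler–Poisson system with entropy constant κ0 on [0, τ] ⊂ [0, r0) with E(0) = E0 and M(t) > 1 on [0, τ]. Set μ1 := (m0²/(γ·κ0))^{1/(γ+1)} and α1 := b0·r0²/2 + ((γ+1)/(2γ))·μ1·r0^{2γ/(γ+1)}. Then for all t ∈ [0, τ], (r0·E0 − α1)/(r0 − t) ≤ E(t) ≤ (r0·E0 + α1)/(r0 − t). -/

import Mathlib

open Real Set

/-- The right-hand side `g1(t, ρ, E, κ)` of the density equation of the reduced
radial Euler–Poisson system (with `t̂ = r0 − t` and mass flux `m0`). -/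
noncomputable def g1 (γ r0 m0 κ t ρv Ev : ℝ) : ℝ :=
  ρv * ((r0 - t) * Ev - m0 ^ 2 / ((r0 - t) ^ 2 * ρv ^ 2)) /
    ((r0 - t) * (γ * κ * ρv ^ (γ - 1) - m0 ^ 2 / ((r0 - t) ^ 2 * ρv ^ 2)))

/-- The right-hand side `g2(t, ρ, E) = t̂·(ρ − b(t))` of the electric-field equation. -/
noncomputable def g2 (r0 t ρv bv : ℝ) : ℝ := (r0 - t) * (ρv - bv)

/-- `(ρ, E)` is a (C¹) solution of the reduced radial Euler–Poisson system with
entropy constant `κ` on the set `I`: `ρ > 0`, `ρ' = g1(t, ρ, E, κ)` and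
`(t̂·E)' = g2(t, ρ, E)` on `I`. -/
def EPsol (γ r0 m0 κ : ℝ) (b ρ E : ℝ → ℝ) (I : Set ℝ) : Prop :=
  (∀ t ∈ I, 0 < ρ t) ∧
  (∀ t ∈ I, HasDerivAt ρ (g1 γ r0 m0 κ t (ρ t) (E t)) t) ∧
  (∀ t ∈ I, HasDerivAt (fun s => (r0 - s) * E s) (g2 r0 t (ρ t) (b t)) t)

/-- The associated velocity `u = m0/(t̂·ρ)`. -/
noncomputable def uA (r0 m0 : ℝ) (ρ : ℝ → ℝ) (t : ℝ) : ℝ := m0 / ((r0 - t) * ρ t)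

/-- The associated pressure `p = κ·ρ^γ`. -/
noncomputable def pA (γ κ : ℝ) (ρ : ℝ → ℝ) (t : ℝ) : ℝ := κ * ρ t ^ γ

/-- The associated squared Mach number `M² = ρ·u²/(γ·p)`. -/
noncomputable def MsqA (γ r0 m0 κ : ℝ) (ρ : ℝ → ℝ) (t : ℝ) : ℝ :=
  ρ t * uA r0 m0 ρ t ^ 2 / (γ * pA γ κ ρ t)

/-- The associated Bernoulli function `B = u²/2 + γ·p/((γ−1)·ρ)`. -/
noncomputable def BA (γ r0 m0 κ : ℝ) (ρ : ℝ → ℝ) (t : ℝ) : ℝ :=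
  uA r0 m0 ρ t ^ 2 / 2 + γ * pA γ κ ρ t / ((γ - 1) * ρ t)

/-- If `(ρ, E)` solves the reduced Euler–Poisson system with entropy
constant `κ0 = p0/ρ0^γ` on `[0, τ] ⊂ [0, r0)` with `E(0) = E0` and `M > 1`, then with
`μ1 = (m0²/(γκ0))^{1/(γ+1)}` and `α1 = b0·r0²/2 + ((γ+1)/(2γ))·μ1·r0^{2γ/(γ+1)}`,
`(r0·E0 − α1)/(r0 − t) ≤ E(t) ≤ (r0·E0 + α1)/(r0 − t)` on `[0, τ]`. -/
theorem stmt6 (γ r0 b0 ρ0 u0 p0 E0 τ : ℝ) (b : ℝ → ℝ)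
    (hγ : 1 < γ) (hr0 : 0 < r0) (hb0 : 0 < b0)
    (hbC1 : ContDiffOn ℝ 1 b (Icc 0 r0))
    (hbpos : ∀ t ∈ Icc 0 r0, 0 < b t)
    (hbbd : ∀ t ∈ Icc 0 r0, |b t| ≤ b0 ∧ |derivWithin b (Icc 0 r0) t| ≤ b0)
    (hρ0 : 0 < ρ0) (hu0 : 0 < u0) (hp0 : 0 < p0) (hE0 : 0 < E0)
    (m0 κ0 : ℝ) (hm0 : m0 = r0 * ρ0 * u0) (hκ0 : κ0 = p0 / ρ0 ^ γ)
    (hτ0 : 0 ≤ τ) (hτr : τ < r0)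
    (ρ E : ℝ → ℝ) (hsol : EPsol γ r0 m0 κ0 b ρ E (Icc 0 τ))
    (hEinit : E 0 = E0)
    (hM : ∀ t ∈ Icc 0 τ, 1 < MsqA γ r0 m0 κ0 ρ t)
    (μ1 α1 : ℝ) (hμ1 : μ1 = (m0 ^ 2 / (γ * κ0)) ^ (1 / (γ + 1)))
    (hα1 : α1 = b0 * r0 ^ 2 / 2 + (γ + 1) / (2 * γ) * μ1 * r0 ^ (2 * γ / (γ + 1))) :
    ∀ t ∈ Icc 0 τ,
      (r0 * E0 - α1) / (r0 - t) ≤ E t ∧ E t ≤ (r0 * E0 + α1) / (r0 - t) := by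
  obtain ⟨hρpos, hρ', hF'⟩ := hsol
  have hγ0 : (0:ℝ) < γ := by linarith
  have hγ1 : (0:ℝ) < γ + 1 := by linarith
  have hm0pos : 0 < m0 := by rw [hm0]; positivity
  have hκ0pos : 0 < κ0 := by rw [hκ0]; positivity
  have hμ1pos : 0 < μ1 := by rw [hμ1]; positivity
  set β : ℝ := 2 * γ / (γ + 1) with hβdef
  have hβ1 : β - 1 = (γ - 1) / (γ + 1) := by
    rw [hβdef, div_sub_one (ne_of_gt hγ1)]; ring
  have hsub : Icc (0:ℝ) τ ⊆ Icc 0 r0 := Icc_subset_Icc le_rfl (le_of_lt hτr)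
  have hspos : ∀ t ∈ Icc (0:ℝ) τ, 0 < r0 - t := by
    intro t ht; have := ht.2; linarith
  -- Key pointwise bound from supersonicity
  have key : ∀ t ∈ Icc (0:ℝ) τ, (r0 - t) * ρ t ≤ μ1 * (r0 - t) ^ ((γ - 1) / (γ + 1)) := by
    intro t ht
    have hs := hspos t ht
    have hρt := hρpos t ht
    have hMt := hM t ht
    have hrg : (0:ℝ) < ρ t ^ γ := Real.rpow_pos_of_pos hρt γ
    -- from M² > 1: γ κ0 ρ^γ < m0²/((r0-t)² ρ)
    have h1 : ρ t ^ (γ + 1) < m0 ^ 2 / (γ * κ0) / (r0 - t) ^ 2 := by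
      unfold MsqA uA pA at hMt
      rw [Real.rpow_add_one (ne_of_gt hρt)]
      rw [lt_div_iff₀ (by positivity)] at hMt
      have h2 : (0:ℝ) < ((r0 - t) * ρ t) ^ 2 := by positivity
      rw [div_pow, one_mul, ← mul_div_assoc, lt_div_iff₀ h2] at hMt
      rw [div_div, lt_div_iff₀ (by positivity)]
      nlinarith [hMt, hρt, mul_pos hρt hρt]
    -- take (γ+1)-th root
    have h3 := Real.rpow_lt_rpow (by positivity) h1 (by positivity : (0:ℝ) < 1 / (γ + 1))
    rw [← Real.rpow_natCast (r0 - t) 2] at h3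
    rw [Real.div_rpow (by positivity) (by positivity), ← Real.rpow_mul hρt.le,
      ← Real.rpow_mul hs.le] at h3
    have hone : (γ + 1) * (1 / (γ + 1)) = 1 := by field_simp
    rw [hone, Real.rpow_one] at h3
    push_cast at h3
    have h4 : ρ t < μ1 / (r0 - t) ^ (2 * (1 / (γ + 1))) := by rw [hμ1]; exact h3
    have h5 : (r0 - t) * ρ t < (r0 - t) * (μ1 / (r0 - t) ^ (2 * (1 / (γ + 1)))) :=
      mul_lt_mul_of_pos_left h4 hs
    have h6 : (r0 - t) * (μ1 / (r0 - t) ^ (2 * (1 / (γ + 1))))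
        = μ1 * (r0 - t) ^ ((γ - 1) / (γ + 1)) := by
      have : (γ - 1) / (γ + 1) = 1 - 2 * (1 / (γ + 1)) := by field_simp; ring
      rw [this, Real.rpow_sub hs, Real.rpow_one]
      ring
    linarith [h6 ▸ h5]
  set F : ℝ → ℝ := fun s => (r0 - s) * E s with hFdef
  have hF0 : F 0 = r0 * E0 := by simp [hFdef, hEinit]
  -- lower bound: G monotone
  set G : ℝ → ℝ := fun s => F s + b0 * (r0 ^ 2 - (r0 - s) ^ 2) / 2 with hGdef
  have hG' : ∀ t ∈ Icc (0:ℝ) τ, HasDerivAt G (g2 r0 t (ρ t) (b t) + b0 * (r0 - t)) t := by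
    intro t ht
    have h1 : HasDerivAt (fun s : ℝ => r0 - s) (-1) t := by
      simpa using (hasDerivAt_id t).const_sub r0
    have h2 := (((h1.pow 2).const_sub (r0^2)).const_mul b0).div_const 2
    have := (hF' t ht).add h2
    refine this.congr_deriv ?_
    push_cast
    ring
  have hGmono : MonotoneOn G (Icc 0 τ) := by
    apply monotoneOn_of_hasDerivWithinAt_nonneg (convex_Icc 0 τ)
      (fun x hx => ((hG' x hx).continuousAt.continuousWithinAt))
      (f' := fun x => g2 r0 x (ρ x) (b x) + b0 * (r0 - x))
    · intro x hx
      rw [interior_Icc] at hx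
      exact ((hG' x (Ioo_subset_Icc_self hx)).hasDerivWithinAt)
    · intro x hx
      rw [interior_Icc] at hx
      have hx' := Ioo_subset_Icc_self hx
      have hs := hspos x hx'
      have hρx := hρpos x hx'
      have hbx := (hbbd x (hsub hx')).1
      have : b x ≤ b0 := le_trans (le_abs_self _) hbx
      unfold g2
      nlinarith
  -- upper bound: H antitone
  set c : ℝ := (γ + 1) / (2 * γ) with hcdef
  have hcβ : c * β = 1 := by rw [hcdef, hβdef]; field_simp
  have hcpos : 0 < c := by positivity
  set H : ℝ → ℝ := fun s => F s + c * μ1 * (r0 - s) ^ β with hHdef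
  have hH' : ∀ t ∈ Icc (0:ℝ) τ,
      HasDerivAt H (g2 r0 t (ρ t) (b t) - μ1 * (r0 - t) ^ (β - 1)) t := by
    intro t ht
    have hs := hspos t ht
    have h1 : HasDerivAt (fun s : ℝ => r0 - s) (-1) t := by
      simpa using (hasDerivAt_id t).const_sub r0
    have h2 : HasDerivAt (fun s : ℝ => (r0 - s) ^ β)
        (β * (r0 - t) ^ (β - 1) * (-1)) t :=
      HasDerivAt.comp t (Real.hasDerivAt_rpow_const (Or.inl (ne_of_gt hs))) h1
    have := (hF' t ht).add ((h2.const_mul (c * μ1)))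
    refine this.congr_deriv ?_
    have : c * μ1 * (β * (r0 - t) ^ (β - 1) * (-1))
        = -(c * β) * (μ1 * (r0 - t) ^ (β - 1)) := by ring
    rw [this, hcβ]
    ring
  have hHanti : AntitoneOn H (Icc 0 τ) := by
    apply antitoneOn_of_hasDerivWithinAt_nonpos (convex_Icc 0 τ)
      (fun x hx => ((hH' x hx).continuousAt.continuousWithinAt))
      (f' := fun x => g2 r0 x (ρ x) (b x) - μ1 * (r0 - x) ^ (β - 1))
    · intro x hx
      rw [interior_Icc] at hx
      exact ((hH' x (Ioo_subset_Icc_self hx)).hasDerivWithinAt)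
    · intro x hx
      rw [interior_Icc] at hx
      have hx' := Ioo_subset_Icc_self hx
      have hs := hspos x hx'
      have hbx := hbpos x (hsub hx')
      have hk := key x hx'
      rw [hβ1]
      unfold g2
      nlinarith
  -- conclude
  intro t ht
  have hs := hspos t ht
  have h0mem : (0:ℝ) ∈ Icc (0:ℝ) τ := ⟨le_rfl, hτ0⟩
  have hGle := hGmono h0mem ht ht.1
  have hHle := hHanti h0mem ht ht.1
  have hr0β : (0:ℝ) ≤ r0 ^ β := Real.rpow_nonneg hr0.le β
  have hsβ : (0:ℝ) ≤ (r0 - t) ^ β := Real.rpow_nonneg hs.le β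
  have hα1' : α1 = b0 * r0 ^ 2 / 2 + c * μ1 * r0 ^ β := by rw [hα1]
  have hFlow : r0 * E0 - α1 ≤ F t := by
    simp only [hGdef, hF0, sub_zero] at hGle
    have hsq : (0:ℝ) ≤ b0 * (r0 - t) ^ 2 := by positivity
    have hmu : (0:ℝ) ≤ c * μ1 * r0 ^ β := by positivity
    rw [hα1]
    linarith
  have hFhigh : F t ≤ r0 * E0 + α1 := by
    simp only [hHdef, hF0, sub_zero] at hHle
    have h1 : (0:ℝ) ≤ c * μ1 * (r0 - t) ^ β := by positivity
    have h2 : (0:ℝ) ≤ b0 * r0 ^ 2 / 2 := by positivity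
    rw [hα1]
    linarith
  have hFt : F t = (r0 - t) * E t := rfl
  constructor
  · rw [div_le_iff₀ hs]
    have h := mul_comm (E t) (r0 - t)
    linarith only [hFlow, hFt, h]
  · rw [le_div_iff₀ hs]
    have h := mul_comm (E t) (r0 - t)
    linarith only [hFhigh, hFt, h]
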